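/- Let U ⊆ ℍ be open, f₀, f₁ : ℝ⁴ → ℝ be C¹, f : U → ℍ be given by f(x) = f₁(x₁,x₂,x₃,x₄)e₁ + ∑ᵢ₌₂⁴ xᵢ f₀(x₁,x₂,x₃,x₄)eᵢ, and c = ∑ₖcₖeₖ ∈ U. If there exists L ∈ ℍ such that (Δq)⁻¹·{ f(c+Δq) − f(c) + ∑ᵢ₌₂⁴ [ f←ᶜᵢ(c + (Δq)ᵢ·(e₁+e₂+e₃+e₄)) − f←ᶜᵢ(c) ] } tends to L as Δq → 0 along the punctured neighborhood filter 𝓝[≠] 0 in ℍ (where (Δq)ᵢ denotes the i-th real coordinate of Δq), then f is algebraic regular at c and L = ∂f/∂x₁(c). -/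

import Mathlib

open scoped Quaternion

noncomputable section

/-- The standard basis `e₁ = 1, e₂ = i, e₃ = j, e₄ = k` of the quaternions. -/
def e : Fin 4 → ℍ[ℝ] := ![1, ⟨0,1,0,0⟩, ⟨0,0,1,0⟩, ⟨0,0,0,1⟩]

@[simp] lemma hq_smul_re (r : ℝ) (x : ℍ[ℝ]) : (r • x).re = r * x.re := rfl
@[simp] lemma hq_smul_imI (r : ℝ) (x : ℍ[ℝ]) : (r • x).imI = r * x.imI := rfl
@[simp] lemma hq_smul_imJ (r : ℝ) (x : ℍ[ℝ]) : (r • x).imJ = r * x.imJ := rfl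
@[simp] lemma hq_smul_imK (r : ℝ) (x : ℍ[ℝ]) : (r • x).imK = r * x.imK := rfl
@[simp] lemma hq_add_re (x y : ℍ[ℝ]) : (x + y).re = x.re + y.re := rfl
@[simp] lemma hq_add_imI (x y : ℍ[ℝ]) : (x + y).imI = x.imI + y.imI := rfl
@[simp] lemma hq_add_imJ (x y : ℍ[ℝ]) : (x + y).imJ = x.imJ + y.imJ := rfl
@[simp] lemma hq_add_imK (x y : ℍ[ℝ]) : (x + y).imK = x.imK + y.imK := rfl
lemma hq_ext_iff (x y : ℍ[ℝ]) :
    x = y ↔ x.re = y.re ∧ x.imI = y.imI ∧ x.imJ = y.imJ ∧ x.imK = y.imK :=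
  QuaternionAlgebra.ext_iff
@[simp] lemma e0_re : (e 0).re = 1 := rfl
@[simp] lemma e0_imI : (e 0).imI = 0 := rfl
@[simp] lemma e0_imJ : (e 0).imJ = 0 := rfl
@[simp] lemma e0_imK : (e 0).imK = 0 := rfl
@[simp] lemma e1_re : (e 1).re = 0 := rfl
@[simp] lemma e1_imI : (e 1).imI = 1 := rfl
@[simp] lemma e1_imJ : (e 1).imJ = 0 := rfl
@[simp] lemma e1_imK : (e 1).imK = 0 := rfl
@[simp] lemma e2_re : (e 2).re = 0 := rfl
@[simp] lemma e2_imI : (e 2).imI = 0 := rfl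
@[simp] lemma e2_imJ : (e 2).imJ = 1 := rfl
@[simp] lemma e2_imK : (e 2).imK = 0 := rfl
@[simp] lemma e3_re : (e 3).re = 0 := rfl
@[simp] lemma e3_imI : (e 3).imI = 0 := rfl
@[simp] lemma e3_imJ : (e 3).imJ = 0 := rfl
@[simp] lemma e3_imK : (e 3).imK = 1 := rfl
@[simp] lemma hq_zero_re : (0 : ℍ[ℝ]).re = 0 := rfl
@[simp] lemma hq_zero_imI : (0 : ℍ[ℝ]).imI = 0 := rfl
@[simp] lemma hq_zero_imJ : (0 : ℍ[ℝ]).imJ = 0 := rfl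
@[simp] lemma hq_zero_imK : (0 : ℍ[ℝ]).imK = 0 := rfl
@[simp] lemma hq_one_re : (1 : ℍ[ℝ]).re = 1 := rfl
@[simp] lemma hq_one_imI : (1 : ℍ[ℝ]).imI = 0 := rfl
@[simp] lemma hq_one_imJ : (1 : ℍ[ℝ]).imJ = 0 := rfl
@[simp] lemma hq_one_imK : (1 : ℍ[ℝ]).imK = 0 := rfl
lemma hq_mul_re (a b : ℍ[ℝ]) :
    (a * b).re = a.re * b.re - a.imI * b.imI - a.imJ * b.imJ - a.imK * b.imK := Quaternion.re_mul a b
lemma hq_mul_imI (a b : ℍ[ℝ]) :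
    (a * b).imI = a.re * b.imI + a.imI * b.re + a.imJ * b.imK - a.imK * b.imJ := Quaternion.imI_mul a b
lemma hq_mul_imJ (a b : ℍ[ℝ]) :
    (a * b).imJ = a.re * b.imJ - a.imI * b.imK + a.imJ * b.re + a.imK * b.imI := Quaternion.imJ_mul a b
lemma hq_mul_imK (a b : ℍ[ℝ]) :
    (a * b).imK = a.re * b.imK + a.imI * b.imJ - a.imJ * b.imI + a.imK * b.re := Quaternion.imK_mul a b

/-- The real coordinates of a quaternion. -/
def toTuple (x : ℍ[ℝ]) : Fin 4 → ℝ := ![x.re, x.imI, x.imJ, x.imK]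
/-- The `i`-th partial derivative of a function `g : ℝ⁴ → ℝ`. -/
def pd (g : (Fin 4 → ℝ) → ℝ) (i : Fin 4) (p : Fin 4 → ℝ) : ℝ :=
  fderiv ℝ g p (Pi.single i 1)

/-- `f` is given on `U` by `f(x) = f₁(x₁,x₂,x₃,x₄)e₁ + ∑ₖ₌₂⁴ xₖ f₀(x₁,x₂,x₃,x₄)eₖ`. -/
def Represents (f : ℍ[ℝ] → ℍ[ℝ]) (U : Set ℍ[ℝ]) (f₀ f₁ : (Fin 4 → ℝ) → ℝ) : Prop :=
  ∀ x ∈ U, f x = f₁ (toTuple x) • e 0 + (x.imI * f₀ (toTuple x)) • e 1 +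
    (x.imJ * f₀ (toTuple x)) • e 2 + (x.imK * f₀ (toTuple x)) • e 3

/-- The generalized Cauchy–Riemann equations (ii) of algebraic regularity, at `p ∈ ℝ⁴`. -/
def RegularEqs (f₀ f₁ : (Fin 4 → ℝ) → ℝ) (p : Fin 4 → ℝ) : Prop :=
  pd f₁ 0 p = f₀ p + p 1 * pd f₀ 1 p + p 2 * pd f₀ 2 p + p 3 * pd f₀ 3 p ∧
  (∀ i : Fin 4, i ≠ 0 → pd f₁ i p = -(p i * pd f₀ 0 p)) ∧
  (∀ i j : Fin 4, i ≠ 0 → j ≠ 0 → i ≠ j → p i * pd f₀ j p = p j * pd f₀ i p)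

/-- `f` is algebraic regular at `c ∈ U`. -/
def AlgebraicRegularAt (f : ℍ[ℝ] → ℍ[ℝ]) (U : Set ℍ[ℝ]) (c : ℍ[ℝ]) : Prop :=
  ∃ f₀ f₁ : (Fin 4 → ℝ) → ℝ, ContDiff ℝ 1 f₀ ∧ ContDiff ℝ 1 f₁ ∧
    Represents f U f₀ f₁ ∧ RegularEqs f₀ f₁ (toTuple c)

/-- `f` is algebraic regular on `U`. -/
def AlgebraicRegularOn (f : ℍ[ℝ] → ℍ[ℝ]) (U : Set ℍ[ℝ]) : Prop :=
  ∀ c ∈ U, AlgebraicRegularAt f U c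
/-- The function `f←ᶜ₄` (case `i = 2, j = 3` of (113)). -/
def flFour (f₀ : (Fin 4 → ℝ) → ℝ) (c : ℍ[ℝ]) (x : ℍ[ℝ]) : ℍ[ℝ] :=
  (c.imI * f₀ ![c.re, x.imI, c.imJ, c.imK] + c.imJ * f₀ ![c.re, c.imI, x.imJ, c.imK]) • e 3 -
  ((-1 : ℝ) ^ (2 + 3) * c.imI * f₀ ![x.re, c.imI, c.imJ, c.imK] +
    c.imK * f₀ ![c.re, c.imI, x.imJ, c.imK]) • e 2 +
  ((-1 : ℝ) ^ (2 + 3) * c.imJ * f₀ ![x.re, c.imI, c.imJ, c.imK] -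
    c.imK * f₀ ![c.re, x.imI, c.imJ, c.imK]) • e 1

/-- The function `f←ᶜ₃` (case `i = 2, j = 4` of (113)). -/
def flThree (f₀ : (Fin 4 → ℝ) → ℝ) (c : ℍ[ℝ]) (x : ℍ[ℝ]) : ℍ[ℝ] :=
  (c.imI * f₀ ![c.re, x.imI, c.imJ, c.imK] + c.imK * f₀ ![c.re, c.imI, c.imJ, x.imK]) • e 2 -
  ((-1 : ℝ) ^ (2 + 4) * c.imI * f₀ ![x.re, c.imI, c.imJ, c.imK] +
    c.imJ * f₀ ![c.re, c.imI, c.imJ, x.imK]) • e 3 +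
  ((-1 : ℝ) ^ (2 + 4) * c.imK * f₀ ![x.re, c.imI, c.imJ, c.imK] -
    c.imJ * f₀ ![c.re, x.imI, c.imJ, c.imK]) • e 1

/-- The function `f←ᶜ₂` (case `i = 3, j = 4` of (113)). -/
def flTwo (f₀ : (Fin 4 → ℝ) → ℝ) (c : ℍ[ℝ]) (x : ℍ[ℝ]) : ℍ[ℝ] :=
  (c.imJ * f₀ ![c.re, c.imI, x.imJ, c.imK] + c.imK * f₀ ![c.re, c.imI, c.imJ, x.imK]) • e 1 -
  ((-1 : ℝ) ^ (3 + 4) * c.imJ * f₀ ![x.re, c.imI, c.imJ, c.imK] +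
    c.imI * f₀ ![c.re, c.imI, c.imJ, x.imK]) • e 3 +
  ((-1 : ℝ) ^ (3 + 4) * c.imK * f₀ ![x.re, c.imI, c.imJ, c.imK] -
    c.imI * f₀ ![c.re, c.imI, x.imJ, c.imK]) • e 2

/-- The left difference quotient of Proposition 4.1 (ii). -/
def leftQuot (f : ℍ[ℝ] → ℍ[ℝ]) (f₀ : (Fin 4 → ℝ) → ℝ) (c : ℍ[ℝ]) (Δq : ℍ[ℝ]) : ℍ[ℝ] :=
  (Δq)⁻¹ *
    (f (c + Δq) - f c +
      (flTwo f₀ c (c + Δq.imI • (e 0 + e 1 + e 2 + e 3)) - flTwo f₀ c c) +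
      (flThree f₀ c (c + Δq.imJ • (e 0 + e 1 + e 2 + e 3)) - flThree f₀ c c) +
      (flFour f₀ c (c + Δq.imK • (e 0 + e 1 + e 2 + e 3)) - flFour f₀ c c))

-- AUX
open Filter

def P (k : Fin 4) : Fin 4 → ℝ := Pi.single k 1
def qs : ℍ[ℝ] := e 0 + e 1 + e 2 + e 3

lemma tt0 (x : ℍ[ℝ]) : toTuple x 0 = x.re := rfl
lemma tt1 (x : ℍ[ℝ]) : toTuple x 1 = x.imI := rfl
lemma tt2 (x : ℍ[ℝ]) : toTuple x 2 = x.imJ := rfl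
lemma tt3 (x : ℍ[ℝ]) : toTuple x 3 = x.imK := rfl

lemma toTuple_add_smul (c : ℍ[ℝ]) (t : ℝ) (k : Fin 4) :
    toTuple (c + t • e k) = toTuple c + t • P k := by
  funext i; fin_cases k <;> fin_cases i <;> simp [toTuple, P, Pi.single_apply]

lemma vec0 (c : ℍ[ℝ]) (t : ℝ) :
    ![c.re + t, c.imI, c.imJ, c.imK] = toTuple c + t • P 0 := by
  funext i; fin_cases i <;> simp [toTuple, P, Pi.single_apply]
lemma vec1 (c : ℍ[ℝ]) (t : ℝ) :
    ![c.re, c.imI + t, c.imJ, c.imK] = toTuple c + t • P 1 := by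
  funext i; fin_cases i <;> simp [toTuple, P, Pi.single_apply]
lemma vec2 (c : ℍ[ℝ]) (t : ℝ) :
    ![c.re, c.imI, c.imJ + t, c.imK] = toTuple c + t • P 2 := by
  funext i; fin_cases i <;> simp [toTuple, P, Pi.single_apply]
lemma vec3 (c : ℍ[ℝ]) (t : ℝ) :
    ![c.re, c.imI, c.imJ, c.imK + t] = toTuple c + t • P 3 := by
  funext i; fin_cases i <;> simp [toTuple, P, Pi.single_apply]

lemma qs_re : qs.re = 1 := by simp [qs]
lemma qs_imI : qs.imI = 1 := by simp [qs]
lemma qs_imJ : qs.imJ = 1 := by simp [qs]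
lemma qs_imK : qs.imK = 1 := by simp [qs]

lemma e_ne (k : Fin 4) : e k ≠ 0 := by
  fin_cases k <;> simp [hq_ext_iff]

def coordL (i : Fin 4) : ℍ[ℝ] →ₗ[ℝ] ℝ where
  toFun x := toTuple x i
  map_add' x y := by fin_cases i <;> simp [toTuple]
  map_smul' t x := by fin_cases i <;> simp [toTuple]

lemma diff_coord (i : Fin 4) : Differentiable ℝ (fun x : ℍ[ℝ] => toTuple x i) :=
  (coordL i).toContinuousLinearMap.differentiable

lemma diff_re : Differentiable ℝ (fun x : ℍ[ℝ] => x.re) := diff_coord 0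
lemma diff_imI : Differentiable ℝ (fun x : ℍ[ℝ] => x.imI) := diff_coord 1
lemma diff_imJ : Differentiable ℝ (fun x : ℍ[ℝ] => x.imJ) := diff_coord 2
lemma diff_imK : Differentiable ℝ (fun x : ℍ[ℝ] => x.imK) := diff_coord 3

lemma diff_toTuple : Differentiable ℝ toTuple := by
  rw [show toTuple = fun x i => toTuple x i from rfl]
  exact differentiable_pi.mpr diff_coord

lemma hpd {f₀ : (Fin 4 → ℝ) → ℝ} (hf₀ : ContDiff ℝ 1 f₀) (p : Fin 4 → ℝ) (k : Fin 4) :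
    HasDerivAt (fun t : ℝ => f₀ (p + t • P k)) (pd f₀ k p) 0 := by
  have hline : HasDerivAt (fun t : ℝ => p + t • P k) (P k) 0 := by
    simpa using ((hasDerivAt_id (0:ℝ)).smul_const (P k)).const_add p
  have hF : HasFDerivAt f₀ (fderiv ℝ f₀ p) (p + (0:ℝ) • P k) := by
    simpa using (hf₀.differentiable one_ne_zero p).hasFDerivAt
  simpa [pd, P, Function.comp_def] using hF.comp_hasDerivAt 0 hline

lemma key (g : ℍ[ℝ] → ℍ[ℝ]) (hg : DifferentiableAt ℝ g 0) (hg0 : g 0 = 0)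
    (L : ℍ[ℝ]) (hL : Tendsto (fun Δq => Δq⁻¹ * g Δq) (nhdsWithin 0 {q : ℍ[ℝ] | q ≠ 0}) (nhds L))
    (v : ℍ[ℝ]) (hv : v ≠ 0) : fderiv ℝ g 0 v = v * L := by
  have hline : HasDerivAt (fun t : ℝ => g (t • v)) (fderiv ℝ g 0 v) 0 := by
    have h1 : HasDerivAt (fun t : ℝ => t • v) v 0 := by
      simpa using (hasDerivAt_id (0:ℝ)).smul_const v
    have h2 : HasFDerivAt g (fderiv ℝ g 0) ((0:ℝ) • v) := by simpa using hg.hasFDerivAt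
    simpa [Function.comp_def] using h2.comp_hasDerivAt 0 h1
  have hslope := hasDerivAt_iff_tendsto_slope.mp hline
  have hmap : Tendsto (fun t : ℝ => t • v) (nhdsWithin 0 {t : ℝ | t ≠ 0})
      (nhdsWithin 0 {q : ℍ[ℝ] | q ≠ 0}) := by
    rw [tendsto_nhdsWithin_iff]
    constructor
    · have : Continuous (fun t : ℝ => t • v) := continuous_id.smul continuous_const
      have h := (this.tendsto 0).mono_left (nhdsWithin_le_nhds (s := {t : ℝ | t ≠ 0}))
      simpa using h
    · filter_upwards [eventually_mem_nhdsWithin] with t ht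
      exact smul_ne_zero ht hv
  have h2 : Tendsto (fun t : ℝ => (t • v)⁻¹ * g (t • v))
      (nhdsWithin 0 {t : ℝ | t ≠ 0}) (nhds L) := hL.comp hmap
  have heq : (fun t : ℝ => (t • v)⁻¹ * g (t • v))
      = fun t : ℝ => v⁻¹ * (slope (fun s : ℝ => g (s • v)) 0 t) := by
    funext t
    simp [slope_def_field, smul_inv₀, hg0, slope, smul_mul_assoc, mul_smul_comm]
  rw [heq] at h2
  have h3 : Tendsto (fun t : ℝ => v⁻¹ * (slope (fun s : ℝ => g (s • v)) 0 t))
      (nhdsWithin 0 {t : ℝ | t ≠ 0}) (nhds (v⁻¹ * fderiv ℝ g 0 v)) :=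
    (continuous_const.mul continuous_id).continuousAt.tendsto.comp hslope
  haveI : (nhdsWithin (0:ℝ) {t : ℝ | t ≠ 0}).NeBot := Module.punctured_nhds_neBot ℝ ℝ 0
  have huniq : L = v⁻¹ * fderiv ℝ g 0 v := tendsto_nhds_unique h2 h3
  rw [huniq, ← mul_assoc, mul_inv_cancel₀ hv, one_mul]

lemma fderiv_line (g : ℍ[ℝ] → ℍ[ℝ]) (x v : ℍ[ℝ]) (hg : DifferentiableAt ℝ g x) :
    HasDerivAt (fun t : ℝ => g (x + t • v)) (fderiv ℝ g x v) 0 := by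
  have h1 : HasDerivAt (fun t : ℝ => x + t • v) v 0 := by
    simpa using ((hasDerivAt_id (0:ℝ)).smul_const v).const_add x
  have h2 : HasFDerivAt g (fderiv ℝ g x) (x + (0:ℝ) • v) := by simpa using hg.hasFDerivAt
  simpa [Function.comp_def] using h2.comp_hasDerivAt 0 h1

def FF (f₀ f₁ : (Fin 4 → ℝ) → ℝ) (x : ℍ[ℝ]) : ℍ[ℝ] :=
  f₁ (toTuple x) • e 0 + (x.imI * f₀ (toTuple x)) • e 1 +
    (x.imJ * f₀ (toTuple x)) • e 2 + (x.imK * f₀ (toTuple x)) • e 3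

lemma diff_FF {f₀ f₁ : (Fin 4 → ℝ) → ℝ} (hf₀ : ContDiff ℝ 1 f₀) (hf₁ : ContDiff ℝ 1 f₁) :
    Differentiable ℝ (FF f₀ f₁) := by
  have h0 : Differentiable ℝ (fun x : ℍ[ℝ] => f₀ (toTuple x)) :=
    (hf₀.differentiable one_ne_zero).comp diff_toTuple
  have h1 : Differentiable ℝ (fun x : ℍ[ℝ] => f₁ (toTuple x)) :=
    (hf₁.differentiable one_ne_zero).comp diff_toTuple
  exact (((h1.smul_const (e 0)).add ((diff_imI.mul h0).smul_const (e 1))).add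
    ((diff_imJ.mul h0).smul_const (e 2))).add ((diff_imK.mul h0).smul_const (e 3))

lemma hFF_line {f₀ f₁ : (Fin 4 → ℝ) → ℝ} (hf₀ : ContDiff ℝ 1 f₀) (hf₁ : ContDiff ℝ 1 f₁)
    (c : ℍ[ℝ]) (k : Fin 4) :
    HasDerivAt (fun t : ℝ => FF f₀ f₁ (c + t • e k))
      (pd f₁ k (toTuple c) • e 0
        + (P k 1 * f₀ (toTuple c) + toTuple c 1 * pd f₀ k (toTuple c)) • e 1
        + (P k 2 * f₀ (toTuple c) + toTuple c 2 * pd f₀ k (toTuple c)) • e 2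
        + (P k 3 * f₀ (toTuple c) + toTuple c 3 * pd f₀ k (toTuple c)) • e 3) 0 := by
  have hrw : (fun t : ℝ => FF f₀ f₁ (c + t • e k)) = fun t =>
      f₁ (toTuple c + t • P k) • e 0
      + ((toTuple c 1 + t * P k 1) * f₀ (toTuple c + t • P k)) • e 1
      + ((toTuple c 2 + t * P k 2) * f₀ (toTuple c + t • P k)) • e 2
      + ((toTuple c 3 + t * P k 3) * f₀ (toTuple c + t • P k)) • e 3 := by
    funext t
    simp only [FF, ← tt1, ← tt2, ← tt3, toTuple_add_smul, Pi.add_apply, Pi.smul_apply,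
      smul_eq_mul]
  rw [hrw]
  have hc1 : ∀ m : Fin 4, HasDerivAt (fun t : ℝ => toTuple c m + t * P k m) (P k m) 0 :=
    fun m => by simpa using ((hasDerivAt_id (0:ℝ)).mul_const (P k m)).const_add (toTuple c m)
  have H := ((((hpd hf₁ (toTuple c) k).smul_const (e 0)).add
      (((hc1 1).mul (hpd hf₀ (toTuple c) k)).smul_const (e 1))).add
      (((hc1 2).mul (hpd hf₀ (toTuple c) k)).smul_const (e 2))).add
      (((hc1 3).mul (hpd hf₀ (toTuple c) k)).smul_const (e 3))
  simpa [Pi.add_def, Pi.mul_def] using H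

section FL
variable (f₀ : (Fin 4 → ℝ) → ℝ) (c : ℍ[ℝ])

lemma coord_qs (t : ℝ) : (c + t • qs).re = c.re + t ∧ (c + t • qs).imI = c.imI + t ∧
    (c + t • qs).imJ = c.imJ + t ∧ (c + t • qs).imK = c.imK + t := by
  refine ⟨?_, ?_, ?_, ?_⟩ <;> simp [qs]

lemma flTwo_line (t : ℝ) : flTwo f₀ c (c + t • qs) =
    (c.imJ * f₀ (toTuple c + t • P 2) + c.imK * f₀ (toTuple c + t • P 3)) • e 1 -
    ((-1 : ℝ) ^ (3 + 4) * c.imJ * f₀ (toTuple c + t • P 0) +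
      c.imI * f₀ (toTuple c + t • P 3)) • e 3 +
    ((-1 : ℝ) ^ (3 + 4) * c.imK * f₀ (toTuple c + t • P 0) -
      c.imI * f₀ (toTuple c + t • P 2)) • e 2 := by
  obtain ⟨h0, h1, h2, h3⟩ := coord_qs c t
  rw [flTwo, h0, h2, h3, vec0, vec2, vec3]

lemma flThree_line (t : ℝ) : flThree f₀ c (c + t • qs) =
    (c.imI * f₀ (toTuple c + t • P 1) + c.imK * f₀ (toTuple c + t • P 3)) • e 2 -
    ((-1 : ℝ) ^ (2 + 4) * c.imI * f₀ (toTuple c + t • P 0) +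
      c.imJ * f₀ (toTuple c + t • P 3)) • e 3 +
    ((-1 : ℝ) ^ (2 + 4) * c.imK * f₀ (toTuple c + t • P 0) -
      c.imJ * f₀ (toTuple c + t • P 1)) • e 1 := by
  obtain ⟨h0, h1, h2, h3⟩ := coord_qs c t
  rw [flThree, h0, h1, h3, vec0, vec1, vec3]

lemma flFour_line (t : ℝ) : flFour f₀ c (c + t • qs) =
    (c.imI * f₀ (toTuple c + t • P 1) + c.imJ * f₀ (toTuple c + t • P 2)) • e 3 -
    ((-1 : ℝ) ^ (2 + 3) * c.imI * f₀ (toTuple c + t • P 0) +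
      c.imK * f₀ (toTuple c + t • P 2)) • e 2 +
    ((-1 : ℝ) ^ (2 + 3) * c.imJ * f₀ (toTuple c + t • P 0) -
      c.imK * f₀ (toTuple c + t • P 1)) • e 1 := by
  obtain ⟨h0, h1, h2, h3⟩ := coord_qs c t
  rw [flFour, h0, h1, h2, vec0, vec1, vec2]

variable {f₀} in
lemma ha2 (hf₀ : ContDiff ℝ 1 f₀) :
    HasDerivAt (fun t : ℝ => flTwo f₀ c (c + t • qs))
      ((c.imJ * pd f₀ 2 (toTuple c) + c.imK * pd f₀ 3 (toTuple c)) • e 1 -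
       ((-1 : ℝ) ^ (3 + 4) * c.imJ * pd f₀ 0 (toTuple c) +
         c.imI * pd f₀ 3 (toTuple c)) • e 3 +
       ((-1 : ℝ) ^ (3 + 4) * c.imK * pd f₀ 0 (toTuple c) -
         c.imI * pd f₀ 2 (toTuple c)) • e 2) 0 := by
  rw [show (fun t : ℝ => flTwo f₀ c (c + t • qs)) = _ from funext (flTwo_line f₀ c)]
  exact ((((hpd hf₀ (toTuple c) 2).const_mul c.imJ).add
      ((hpd hf₀ (toTuple c) 3).const_mul c.imK)).smul_const (e 1)).sub
    ((((hpd hf₀ (toTuple c) 0).const_mul ((-1 : ℝ) ^ (3 + 4) * c.imJ)).add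
      ((hpd hf₀ (toTuple c) 3).const_mul c.imI)).smul_const (e 3)) |>.add
    ((((hpd hf₀ (toTuple c) 0).const_mul ((-1 : ℝ) ^ (3 + 4) * c.imK)).sub
      ((hpd hf₀ (toTuple c) 2).const_mul c.imI)).smul_const (e 2))

variable {f₀} in
lemma ha3 (hf₀ : ContDiff ℝ 1 f₀) :
    HasDerivAt (fun t : ℝ => flThree f₀ c (c + t • qs))
      ((c.imI * pd f₀ 1 (toTuple c) + c.imK * pd f₀ 3 (toTuple c)) • e 2 -
       ((-1 : ℝ) ^ (2 + 4) * c.imI * pd f₀ 0 (toTuple c) +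
         c.imJ * pd f₀ 3 (toTuple c)) • e 3 +
       ((-1 : ℝ) ^ (2 + 4) * c.imK * pd f₀ 0 (toTuple c) -
         c.imJ * pd f₀ 1 (toTuple c)) • e 1) 0 := by
  rw [show (fun t : ℝ => flThree f₀ c (c + t • qs)) = _ from funext (flThree_line f₀ c)]
  exact ((((hpd hf₀ (toTuple c) 1).const_mul c.imI).add
      ((hpd hf₀ (toTuple c) 3).const_mul c.imK)).smul_const (e 2)).sub
    ((((hpd hf₀ (toTuple c) 0).const_mul ((-1 : ℝ) ^ (2 + 4) * c.imI)).add
      ((hpd hf₀ (toTuple c) 3).const_mul c.imJ)).smul_const (e 3)) |>.add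
    ((((hpd hf₀ (toTuple c) 0).const_mul ((-1 : ℝ) ^ (2 + 4) * c.imK)).sub
      ((hpd hf₀ (toTuple c) 1).const_mul c.imJ)).smul_const (e 1))

variable {f₀} in
lemma ha4 (hf₀ : ContDiff ℝ 1 f₀) :
    HasDerivAt (fun t : ℝ => flFour f₀ c (c + t • qs))
      ((c.imI * pd f₀ 1 (toTuple c) + c.imJ * pd f₀ 2 (toTuple c)) • e 3 -
       ((-1 : ℝ) ^ (2 + 3) * c.imI * pd f₀ 0 (toTuple c) +
         c.imK * pd f₀ 2 (toTuple c)) • e 2 +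
       ((-1 : ℝ) ^ (2 + 3) * c.imJ * pd f₀ 0 (toTuple c) -
         c.imK * pd f₀ 1 (toTuple c)) • e 1) 0 := by
  rw [show (fun t : ℝ => flFour f₀ c (c + t • qs)) = _ from funext (flFour_line f₀ c)]
  exact ((((hpd hf₀ (toTuple c) 1).const_mul c.imI).add
      ((hpd hf₀ (toTuple c) 2).const_mul c.imJ)).smul_const (e 3)).sub
    ((((hpd hf₀ (toTuple c) 0).const_mul ((-1 : ℝ) ^ (2 + 3) * c.imI)).add
      ((hpd hf₀ (toTuple c) 2).const_mul c.imK)).smul_const (e 2)) |>.add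
    ((((hpd hf₀ (toTuple c) 0).const_mul ((-1 : ℝ) ^ (2 + 3) * c.imJ)).sub
      ((hpd hf₀ (toTuple c) 1).const_mul c.imK)).smul_const (e 1))

end FL

def GG (f₀ f₁ : (Fin 4 → ℝ) → ℝ) (c : ℍ[ℝ]) (Δq : ℍ[ℝ]) : ℍ[ℝ] :=
  FF f₀ f₁ (c + Δq) - FF f₀ f₁ c + (flTwo f₀ c (c + Δq.imI • qs) - flTwo f₀ c c) +
    (flThree f₀ c (c + Δq.imJ • qs) - flThree f₀ c c) +
    (flFour f₀ c (c + Δq.imK • qs) - flFour f₀ c c)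

section GGL
variable {f₀ f₁ : (Fin 4 → ℝ) → ℝ} (c : ℍ[ℝ])

lemma diff_comp_inner (hf₀ : ContDiff ℝ 1 f₀) {w : ℍ[ℝ] → ℝ} (hw : Differentiable ℝ w)
    (m : Fin 4) : Differentiable ℝ (fun Δq : ℍ[ℝ] => f₀ (toTuple c + w Δq • P m)) :=
  (hf₀.differentiable one_ne_zero).comp ((differentiable_const _).add (hw.smul_const (P m)))

lemma diff_corr2 (hf₀ : ContDiff ℝ 1 f₀) :
    Differentiable ℝ (fun Δq : ℍ[ℝ] => flTwo f₀ c (c + Δq.imI • qs)) := by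
  rw [show (fun Δq : ℍ[ℝ] => flTwo f₀ c (c + Δq.imI • qs)) = _ from
    funext fun Δq => flTwo_line f₀ c Δq.imI]
  exact ((((diff_comp_inner c hf₀ diff_imI 2).const_mul c.imJ).add
      ((diff_comp_inner c hf₀ diff_imI 3).const_mul c.imK)).smul_const (e 1)).sub
    ((((diff_comp_inner c hf₀ diff_imI 0).const_mul _).add
      ((diff_comp_inner c hf₀ diff_imI 3).const_mul c.imI)).smul_const (e 3)) |>.add
    ((((diff_comp_inner c hf₀ diff_imI 0).const_mul _).sub
      ((diff_comp_inner c hf₀ diff_imI 2).const_mul c.imI)).smul_const (e 2))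

lemma diff_corr3 (hf₀ : ContDiff ℝ 1 f₀) :
    Differentiable ℝ (fun Δq : ℍ[ℝ] => flThree f₀ c (c + Δq.imJ • qs)) := by
  rw [show (fun Δq : ℍ[ℝ] => flThree f₀ c (c + Δq.imJ • qs)) = _ from
    funext fun Δq => flThree_line f₀ c Δq.imJ]
  exact ((((diff_comp_inner c hf₀ diff_imJ 1).const_mul c.imI).add
      ((diff_comp_inner c hf₀ diff_imJ 3).const_mul c.imK)).smul_const (e 2)).sub
    ((((diff_comp_inner c hf₀ diff_imJ 0).const_mul _).add
      ((diff_comp_inner c hf₀ diff_imJ 3).const_mul c.imJ)).smul_const (e 3)) |>.add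
    ((((diff_comp_inner c hf₀ diff_imJ 0).const_mul _).sub
      ((diff_comp_inner c hf₀ diff_imJ 1).const_mul c.imJ)).smul_const (e 1))

lemma diff_corr4 (hf₀ : ContDiff ℝ 1 f₀) :
    Differentiable ℝ (fun Δq : ℍ[ℝ] => flFour f₀ c (c + Δq.imK • qs)) := by
  rw [show (fun Δq : ℍ[ℝ] => flFour f₀ c (c + Δq.imK • qs)) = _ from
    funext fun Δq => flFour_line f₀ c Δq.imK]
  exact ((((diff_comp_inner c hf₀ diff_imK 1).const_mul c.imI).add
      ((diff_comp_inner c hf₀ diff_imK 2).const_mul c.imJ)).smul_const (e 3)).sub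
    ((((diff_comp_inner c hf₀ diff_imK 0).const_mul _).add
      ((diff_comp_inner c hf₀ diff_imK 2).const_mul c.imK)).smul_const (e 2)) |>.add
    ((((diff_comp_inner c hf₀ diff_imK 0).const_mul _).sub
      ((diff_comp_inner c hf₀ diff_imK 1).const_mul c.imK)).smul_const (e 1))

lemma diff_GG (hf₀ : ContDiff ℝ 1 f₀) (hf₁ : ContDiff ℝ 1 f₁) :
    Differentiable ℝ (GG f₀ f₁ c) := by
  unfold GG
  exact ((((((diff_FF hf₀ hf₁).comp (differentiable_id.const_add c)).sub_const _).add
    ((diff_corr2 c hf₀).sub_const _)).add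
    ((diff_corr3 c hf₀).sub_const _)).add
    ((diff_corr4 c hf₀).sub_const _))

lemma GG_zero : GG f₀ f₁ c 0 = 0 := by
  simp [GG]

lemma GG_line0 : (fun t : ℝ => GG f₀ f₁ c (t • e 0)) =
    fun t => FF f₀ f₁ (c + t • e 0) - FF f₀ f₁ c := by
  funext t
  have h1 : (t • e 0).imI = 0 := by simp
  have h2 : (t • e 0).imJ = 0 := by simp
  have h3 : (t • e 0).imK = 0 := by simp
  simp only [GG, h1, h2, h3, zero_smul, add_zero, sub_self]

lemma GG_line1 : (fun t : ℝ => GG f₀ f₁ c (t • e 1)) =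
    fun t => FF f₀ f₁ (c + t • e 1) - FF f₀ f₁ c +
      (flTwo f₀ c (c + t • qs) - flTwo f₀ c c) := by
  funext t
  have h1 : (t • e 1).imI = t := by simp
  have h2 : (t • e 1).imJ = 0 := by simp
  have h3 : (t • e 1).imK = 0 := by simp
  simp only [GG, h1, h2, h3, zero_smul, add_zero, sub_self]

lemma GG_line2 : (fun t : ℝ => GG f₀ f₁ c (t • e 2)) =
    fun t => FF f₀ f₁ (c + t • e 2) - FF f₀ f₁ c +
      (flThree f₀ c (c + t • qs) - flThree f₀ c c) := by
  funext t
  have h1 : (t • e 2).imI = 0 := by simp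
  have h2 : (t • e 2).imJ = t := by simp
  have h3 : (t • e 2).imK = 0 := by simp
  simp only [GG, h1, h2, h3, zero_smul, add_zero, sub_self]

lemma GG_line3 : (fun t : ℝ => GG f₀ f₁ c (t • e 3)) =
    fun t => FF f₀ f₁ (c + t • e 3) - FF f₀ f₁ c +
      (flFour f₀ c (c + t • qs) - flFour f₀ c c) := by
  funext t
  have h1 : (t • e 3).imI = 0 := by simp
  have h2 : (t • e 3).imJ = 0 := by simp
  have h3 : (t • e 3).imK = t := by simp
  simp only [GG, h1, h2, h3, zero_smul, add_zero, sub_self]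

end GGL

lemma P00 : P 0 0 = 1 := by simp [P]
lemma P01 : P 0 1 = 0 := by norm_num [P, Pi.single_apply] <;> decide
lemma P02 : P 0 2 = 0 := by norm_num [P, Pi.single_apply] <;> decide
lemma P03 : P 0 3 = 0 := by norm_num [P, Pi.single_apply] <;> decide
lemma P10 : P 1 0 = 0 := by norm_num [P, Pi.single_apply] <;> decide
lemma P11 : P 1 1 = 1 := by simp [P]
lemma P12 : P 1 2 = 0 := by norm_num [P, Pi.single_apply] <;> decide
lemma P13 : P 1 3 = 0 := by norm_num [P, Pi.single_apply] <;> decide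
lemma P20 : P 2 0 = 0 := by norm_num [P, Pi.single_apply] <;> decide
lemma P21 : P 2 1 = 0 := by norm_num [P, Pi.single_apply] <;> decide
lemma P22 : P 2 2 = 1 := by simp [P]
lemma P23 : P 2 3 = 0 := by norm_num [P, Pi.single_apply] <;> decide
lemma P30 : P 3 0 = 0 := by norm_num [P, Pi.single_apply] <;> decide
lemma P31 : P 3 1 = 0 := by norm_num [P, Pi.single_apply] <;> decide
lemma P32 : P 3 2 = 0 := by norm_num [P, Pi.single_apply] <;> decide
lemma P33 : P 3 3 = 1 := by simp [P]

/-- if the left difference quotient tends to some `L ∈ ℍ` as `Δq → 0`,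
then `f` is algebraic regular at `c` and `L = ∂f/∂x₁(c)`. -/
theorem algebraicRegularAt_of_tendsto_leftQuot (U : Set ℍ[ℝ]) (hU : IsOpen U)
    (f : ℍ[ℝ] → ℍ[ℝ]) (f₀ f₁ : (Fin 4 → ℝ) → ℝ)
    (hf₀ : ContDiff ℝ 1 f₀) (hf₁ : ContDiff ℝ 1 f₁)
    (hf : Represents f U f₀ f₁) (c : ℍ[ℝ]) (hc : c ∈ U) (L : ℍ[ℝ])
    (hL : Filter.Tendsto (leftQuot f f₀ c) (nhdsWithin 0 {q : ℍ[ℝ] | q ≠ 0}) (nhds L)) :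
    AlgebraicRegularAt f U c ∧ L = fderiv ℝ f c (e 0) := by
  set g : ℍ[ℝ] → ℍ[ℝ] := fun Δq =>
    f (c + Δq) - f c + (flTwo f₀ c (c + Δq.imI • qs) - flTwo f₀ c c) +
      (flThree f₀ c (c + Δq.imJ • qs) - flThree f₀ c c) +
      (flFour f₀ c (c + Δq.imK • qs) - flFour f₀ c c) with hg_def
  have hL' : Filter.Tendsto (fun Δq => Δq⁻¹ * g Δq)
      (nhdsWithin 0 {q : ℍ[ℝ] | q ≠ 0}) (nhds L) := hL
  have hmem : {Δq : ℍ[ℝ] | c + Δq ∈ U} ∈ nhds (0 : ℍ[ℝ]) := by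
    have hcont : Continuous (fun Δq : ℍ[ℝ] => c + Δq) := continuous_const.add continuous_id
    have h := (hcont.continuousAt (x := (0:ℍ[ℝ]))).preimage_mem_nhds
      (hU.mem_nhds (by simpa using hc))
    exact h
  have hgG : g =ᶠ[nhds (0:ℍ[ℝ])] GG f₀ f₁ c := by
    filter_upwards [hmem] with Δq hΔq
    have h1 := hf (c + Δq) hΔq
    have h2 := hf c hc
    simp only [hg_def, GG, FF]
    rw [h1, h2]
  have hdGG : Differentiable ℝ (GG f₀ f₁ c) := diff_GG c hf₀ hf₁
  have hdg : DifferentiableAt ℝ g 0 := (hgG.differentiableAt_iff).mpr (hdGG 0)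
  have hfe : fderiv ℝ g 0 = fderiv ℝ (GG f₀ f₁ c) 0 := hgG.fderiv_eq
  have hg0 : g 0 = 0 := by simp [hg_def]
  have hkey : ∀ k : Fin 4, fderiv ℝ (GG f₀ f₁ c) 0 (e k) = e k * L := by
    intro k; rw [← hfe]; exact key g hdg hg0 L hL' (e k) (e_ne k)
  have hALine : ∀ k : Fin 4,
      HasDerivAt (fun t : ℝ => GG f₀ f₁ c (t • e k)) (e k * L) 0 := by
    intro k
    have h := fderiv_line (GG f₀ f₁ c) 0 (e k) (hdGG 0)
    rw [hkey k] at h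
    simpa using h
  have hE0 : pd f₁ 0 (toTuple c) • e 0
      + (P 0 1 * f₀ (toTuple c) + toTuple c 1 * pd f₀ 0 (toTuple c)) • e 1
      + (P 0 2 * f₀ (toTuple c) + toTuple c 2 * pd f₀ 0 (toTuple c)) • e 2
      + (P 0 3 * f₀ (toTuple c) + toTuple c 3 * pd f₀ 0 (toTuple c)) • e 3 = e 0 * L := by
    refine HasDerivAt.unique ?_ (hALine 0)
    rw [GG_line0]
    exact (hFF_line hf₀ hf₁ c 0).sub_const (FF f₀ f₁ c)
  have hE1 : (pd f₁ 1 (toTuple c) • e 0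
      + (P 1 1 * f₀ (toTuple c) + toTuple c 1 * pd f₀ 1 (toTuple c)) • e 1
      + (P 1 2 * f₀ (toTuple c) + toTuple c 2 * pd f₀ 1 (toTuple c)) • e 2
      + (P 1 3 * f₀ (toTuple c) + toTuple c 3 * pd f₀ 1 (toTuple c)) • e 3)
      + ((c.imJ * pd f₀ 2 (toTuple c) + c.imK * pd f₀ 3 (toTuple c)) • e 1 -
       ((-1 : ℝ) ^ (3 + 4) * c.imJ * pd f₀ 0 (toTuple c) +
         c.imI * pd f₀ 3 (toTuple c)) • e 3 +
       ((-1 : ℝ) ^ (3 + 4) * c.imK * pd f₀ 0 (toTuple c) -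
         c.imI * pd f₀ 2 (toTuple c)) • e 2) = e 1 * L := by
    refine HasDerivAt.unique ?_ (hALine 1)
    rw [GG_line1]
    exact ((hFF_line hf₀ hf₁ c 1).sub_const (FF f₀ f₁ c)).add ((ha2 c hf₀).sub_const _)
  have hE2 : (pd f₁ 2 (toTuple c) • e 0
      + (P 2 1 * f₀ (toTuple c) + toTuple c 1 * pd f₀ 2 (toTuple c)) • e 1
      + (P 2 2 * f₀ (toTuple c) + toTuple c 2 * pd f₀ 2 (toTuple c)) • e 2
      + (P 2 3 * f₀ (toTuple c) + toTuple c 3 * pd f₀ 2 (toTuple c)) • e 3)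
      + ((c.imI * pd f₀ 1 (toTuple c) + c.imK * pd f₀ 3 (toTuple c)) • e 2 -
       ((-1 : ℝ) ^ (2 + 4) * c.imI * pd f₀ 0 (toTuple c) +
         c.imJ * pd f₀ 3 (toTuple c)) • e 3 +
       ((-1 : ℝ) ^ (2 + 4) * c.imK * pd f₀ 0 (toTuple c) -
         c.imJ * pd f₀ 1 (toTuple c)) • e 1) = e 2 * L := by
    refine HasDerivAt.unique ?_ (hALine 2)
    rw [GG_line2]
    exact ((hFF_line hf₀ hf₁ c 2).sub_const (FF f₀ f₁ c)).add ((ha3 c hf₀).sub_const _)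
  have hE3 : (pd f₁ 3 (toTuple c) • e 0
      + (P 3 1 * f₀ (toTuple c) + toTuple c 1 * pd f₀ 3 (toTuple c)) • e 1
      + (P 3 2 * f₀ (toTuple c) + toTuple c 2 * pd f₀ 3 (toTuple c)) • e 2
      + (P 3 3 * f₀ (toTuple c) + toTuple c 3 * pd f₀ 3 (toTuple c)) • e 3)
      + ((c.imI * pd f₀ 1 (toTuple c) + c.imJ * pd f₀ 2 (toTuple c)) • e 3 -
       ((-1 : ℝ) ^ (2 + 3) * c.imI * pd f₀ 0 (toTuple c) +
         c.imK * pd f₀ 2 (toTuple c)) • e 2 +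
       ((-1 : ℝ) ^ (2 + 3) * c.imJ * pd f₀ 0 (toTuple c) -
         c.imK * pd f₀ 1 (toTuple c)) • e 1) = e 3 * L := by
    refine HasDerivAt.unique ?_ (hALine 3)
    rw [GG_line3]
    exact ((hFF_line hf₀ hf₁ c 3).sub_const (FF f₀ f₁ c)).add ((ha4 c hf₀).sub_const _)
  -- components of L
  have hE0' := hE0
  rw [show e 0 = 1 from rfl, one_mul] at hE0'
  have hLre := congrArg (fun q : ℍ[ℝ] => q.re) hE0'.symm
  have hLi := congrArg (fun q : ℍ[ℝ] => q.imI) hE0'.symm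
  have hLj := congrArg (fun q : ℍ[ℝ] => q.imJ) hE0'.symm
  have hLk := congrArg (fun q : ℍ[ℝ] => q.imK) hE0'.symm
  simp only [e0_re, e0_imI, e0_imJ, e0_imK, e1_re, e1_imI, e1_imJ, e1_imK, e2_re, e2_imI, e2_imJ, e2_imK, e3_re, e3_imI, e3_imJ, e3_imK, hq_add_re, hq_add_imI, hq_add_imJ, hq_add_imK, hq_smul_re, hq_smul_imI, hq_smul_imJ, hq_smul_imK, hq_one_re, hq_one_imI, hq_one_imJ, hq_one_imK, hq_mul_re, hq_mul_imI, hq_mul_imJ, hq_mul_imK, toTuple, Matrix.cons_val, Matrix.cons_val_zero, Matrix.cons_val_one, P00, P01, P02, P03, P10, P11, P12, P13, P20, P21, P22, P23, P30, P31, P32, P33] at hLre hLi hLj hLk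
  norm_num [Quaternion.ext_iff] at hLre hLi hLj hLk
  have h1re := congrArg (fun q : ℍ[ℝ] => q.re) hE1
  have h1i := congrArg (fun q : ℍ[ℝ] => q.imI) hE1
  have h1j := congrArg (fun q : ℍ[ℝ] => q.imJ) hE1
  have h1k := congrArg (fun q : ℍ[ℝ] => q.imK) hE1
  have h2re := congrArg (fun q : ℍ[ℝ] => q.re) hE2
  have h2i := congrArg (fun q : ℍ[ℝ] => q.imI) hE2
  have h2j := congrArg (fun q : ℍ[ℝ] => q.imJ) hE2
  have h2k := congrArg (fun q : ℍ[ℝ] => q.imK) hE2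
  have h3re := congrArg (fun q : ℍ[ℝ] => q.re) hE3
  have h3i := congrArg (fun q : ℍ[ℝ] => q.imI) hE3
  have h3j := congrArg (fun q : ℍ[ℝ] => q.imJ) hE3
  have h3k := congrArg (fun q : ℍ[ℝ] => q.imK) hE3
  simp only [e0_re, e0_imI, e0_imJ, e0_imK, e1_re, e1_imI, e1_imJ, e1_imK, e2_re, e2_imI, e2_imJ, e2_imK, e3_re, e3_imI, e3_imJ, e3_imK, hq_add_re, hq_add_imI, hq_add_imJ, hq_add_imK, hq_smul_re, hq_smul_imI, hq_smul_imJ, hq_smul_imK, hq_one_re, hq_one_imI, hq_one_imJ, hq_one_imK, hq_mul_re, hq_mul_imI, hq_mul_imJ, hq_mul_imK, toTuple, Matrix.cons_val, Matrix.cons_val_zero, Matrix.cons_val_one, P00, P01, P02, P03, P10, P11, P12, P13, P20, P21, P22, P23, P30, P31, P32, P33] at h1re h1i h1j h1k h2re h2i h2j h2k h3re h3i h3j h3k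
  norm_num [Quaternion.re_mul, Quaternion.imI_mul, Quaternion.imJ_mul, Quaternion.imK_mul,
    hLre, hLi, hLj, hLk]
    at h1re h1i h1j h1k h2re h2i h2j h2k h3re h3i h3j h3k
  refine ⟨⟨f₀, f₁, hf₀, hf₁, hf, ?_, ?_, ?_⟩, ?_⟩
  · simp [toTuple]
    linarith [h1i]
  · intro i hi
    rcases (by decide :
        ∀ i : Fin 4, i ≠ 0 → i = 1 ∨ i = 2 ∨ i = 3) i hi with rfl | rfl | rfl
    · simp [toTuple]; linarith [h1re]
    · simp [toTuple]; linarith [h2re]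
    · simp [toTuple]; linarith [h3re]
  · intro i j hi hj hij
    rcases (by decide :
        ∀ i j : Fin 4, i ≠ 0 → j ≠ 0 → i ≠ j →
          (i = 1 ∧ j = 2) ∨ (i = 1 ∧ j = 3) ∨ (i = 2 ∧ j = 1) ∨ (i = 2 ∧ j = 3) ∨
          (i = 3 ∧ j = 1) ∨ (i = 3 ∧ j = 2)) i j hi hj hij with
      ⟨rfl, rfl⟩ | ⟨rfl, rfl⟩ | ⟨rfl, rfl⟩ | ⟨rfl, rfl⟩ | ⟨rfl, rfl⟩ | ⟨rfl, rfl⟩ <;>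
      simp [toTuple] <;>
      linarith [h1j, h1k, h2j, h2k, h3j, h3k, h1i, h2i, h3i, h2re, h3re]
  · have hffF : f =ᶠ[nhds c] FF f₀ f₁ := by
      filter_upwards [hU.mem_nhds hc] with x hx
      exact hf x hx
    have hfd : fderiv ℝ f c = fderiv ℝ (FF f₀ f₁) c := hffF.fderiv_eq
    have hDF := fderiv_line (FF f₀ f₁) c (e 0) ((diff_FF hf₀ hf₁) c)
    have hVF0 := hDF.unique (hFF_line hf₀ hf₁ c 0)
    rw [hfd, hVF0, show e 0 = 1 from rfl]
    exact hE0'.symm
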